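/- Let Θ be a measurable space, K ≥ 1, and let μ_pr^K be the K-fold product of a probability measure μ_pr on Θ (so μ_pr^K is invariant under coordinate permutations). Let π : Θ^K → [0,∞) be measurable with ∫ π dμ_pr^K = 1 and let μ be the probability measure on Θ^K with density π with respect to μ_pr^K. Let S_K be a nonempty finite set of permutations of {1,…,K} closed under inversion, and let r : Θ^K × S_K → [0,1] be a swapping ratio, i.e. r(·,σ) is measurable for each σ ∈ S_K and Σ_{σ∈S_K} r(θ,σ) = 1 for every θ ∈ Θ^K. Define the swapping acceptance probability α_swap(θ,σ) := min{1, π(θ_σ) r(θ_σ, σ⁻¹) / (π(θ) r(θ,σ))} when π(θ) r(θ,σ) > 0 and α_swap(θ,σ) := 0 otherwise, and define the swapping kernel q(θ, B) := Σ_{σ∈S_K} r(θ,σ) [ (1 − α_swap(θ,σ)) δ_θ(B) + α_swap(θ,σ) δ_{θ_σ}(B) ]. Then q is a Markov kernel on Θ^K that is reversible with respect to μ: for all measurable sets A, B ⊆ Θ^K, ∫_A q(θ, B) μ(dθ) = ∫_B q(θ, A) μ(dθ). -/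

import Mathlib

open MeasureTheory ProbabilityTheory ENNReal

/-- the generic swapping kernel
`q(θ,B) = ∑_{σ ∈ S_K} r(θ,σ) [(1 − α_swap(θ,σ)) δ_θ(B) + α_swap(θ,σ) δ_{θ_σ}(B)]`
built from a swapping ratio `r` and the Metropolis–Hastings swapping acceptance
probability `α_swap` is a Markov kernel on `Θ^K`, reversible with respect to the
measure `μ` with density `π` w.r.t. the `K`-fold product prior `μ_pr^K`. -/
theorem swapping_kernel_reversible
    {Θ : Type*} [MeasurableSpace Θ] (K : ℕ) (hK : 1 ≤ K)
    (μpr : Measure Θ) [IsProbabilityMeasure μpr]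
    (μprK : Measure (Fin K → Θ)) (hμprK : μprK = Measure.pi fun _ => μpr)
    (π : (Fin K → Θ) → ℝ≥0∞) (hπm : Measurable π) (hπfin : ∀ θ, π θ ≠ ∞)
    (hπint : ∫⁻ θ, π θ ∂μprK = 1)
    (μ : Measure (Fin K → Θ)) (hμ : μ = μprK.withDensity π)
    (SK : Finset (Equiv.Perm (Fin K))) (hSKne : SK.Nonempty)
    (hSKinv : ∀ σ ∈ SK, σ⁻¹ ∈ SK)
    (r : (Fin K → Θ) → Equiv.Perm (Fin K) → ℝ≥0∞)
    (hrm : ∀ σ ∈ SK, Measurable fun θ => r θ σ)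
    (hrle : ∀ θ, ∀ σ ∈ SK, r θ σ ≤ 1)
    (hrsum : ∀ θ, ∑ σ ∈ SK, r θ σ = 1)
    (α : (Fin K → Θ) → Equiv.Perm (Fin K) → ℝ≥0∞)
    (hα : ∀ θ σ, α θ σ =
      if 0 < π θ * r θ σ then
        min 1 ((π (fun i => θ (σ i)) * r (fun i => θ (σ i)) σ⁻¹) / (π θ * r θ σ))
      else 0)
    (q : (Fin K → Θ) → Measure (Fin K → Θ))
    (hq : ∀ θ, q θ = ∑ σ ∈ SK,
      ((r θ σ * (1 - α θ σ)) • Measure.dirac θ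
        + (r θ σ * α θ σ) • Measure.dirac (fun i => θ (σ i)))) :
    (∀ θ, IsProbabilityMeasure (q θ)) ∧
    (∀ B : Set (Fin K → Θ), MeasurableSet B → Measurable fun θ => q θ B) ∧
    (∀ A B : Set (Fin K → Θ), MeasurableSet A → MeasurableSet B →
      ∫⁻ θ in A, q θ B ∂μ = ∫⁻ θ in B, q θ A ∂μ) := by
  classical
  set T : Equiv.Perm (Fin K) → (Fin K → Θ) → (Fin K → Θ) := fun σ θ i => θ (σ i) with hT
  have hTm : ∀ σ, Measurable (T σ) := fun σ =>
    measurable_pi_lambda _ fun i => measurable_pi_apply _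
  have hTinv : ∀ σ θ, T σ (T σ⁻¹ θ) = θ := by
    intro σ θ; funext i; simp [hT]
  have hTmp : ∀ σ, MeasurePreserving (T σ) μprK μprK := by
    intro σ
    have h := measurePreserving_piCongrLeft (fun _ : Fin K => μpr) (σ⁻¹ : Equiv.Perm (Fin K))
    have hcoe : ⇑(MeasurableEquiv.piCongrLeft (fun _ : Fin K => Θ) (σ⁻¹ : Equiv.Perm (Fin K)))
        = T σ := by
      funext θ j
      have := MeasurableEquiv.piCongrLeft_apply_apply (σ⁻¹ : Equiv.Perm (Fin K))
        (β := fun _ : Fin K => Θ) θ (σ j)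
      simpa [hT] using this
    rw [hμprK]; rwa [hcoe] at h
  have hα1 : ∀ θ σ, α θ σ ≤ 1 := by
    intro θ σ; rw [hα]
    split
    · exact min_le_left _ _
    · exact zero_le_one
  have hαm : ∀ σ ∈ SK, Measurable fun θ => α θ σ := by
    intro σ hσ
    have heq : (fun θ => α θ σ) = fun θ =>
        if 0 < π θ * r θ σ then
          min 1 ((π (T σ θ) * r (T σ θ) σ⁻¹) / (π θ * r θ σ)) else 0 :=
      funext fun θ => hα θ σ
    rw [heq]
    have hg : Measurable fun θ => π θ * r θ σ := hπm.mul (hrm σ hσ)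
    have hh : Measurable fun θ => π (T σ θ) * r (T σ θ) σ⁻¹ :=
      (hπm.comp (hTm σ)).mul ((hrm σ⁻¹ (hSKinv σ hσ)).comp (hTm σ))
    exact Measurable.ite (measurableSet_lt measurable_const hg)
      (measurable_const.min (hh.div hg)) measurable_const
  have hrfin : ∀ θ, ∀ σ ∈ SK, r θ σ ≠ ∞ := fun θ σ hσ =>
    ne_top_of_le_ne_top one_ne_top (hrle θ σ hσ)
  have hqB : ∀ (B : Set (Fin K → Θ)), MeasurableSet B → ∀ θ, q θ B =
      ∑ σ ∈ SK, (r θ σ * (1 - α θ σ) * B.indicator 1 θ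
        + r θ σ * α θ σ * B.indicator 1 (T σ θ)) := by
    intro B hB θ
    rw [hq, Measure.finset_sum_apply]
    refine Finset.sum_congr rfl fun σ _ => ?_
    rw [Measure.add_apply, Measure.smul_apply, Measure.smul_apply,
      Measure.dirac_apply' _ hB, Measure.dirac_apply' _ hB]
    simp [hT, smul_eq_mul]
  have hprob : ∀ θ, IsProbabilityMeasure (q θ) := by
    intro θ
    constructor
    rw [hqB Set.univ MeasurableSet.univ θ]
    simp only [Set.indicator_univ, Pi.one_apply, mul_one]
    calc ∑ σ ∈ SK, (r θ σ * (1 - α θ σ) + r θ σ * α θ σ)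
        = ∑ σ ∈ SK, r θ σ := by
          refine Finset.sum_congr rfl fun σ _ => ?_
          rw [← mul_add, tsub_add_cancel_of_le (hα1 θ σ), mul_one]
      _ = 1 := hrsum θ
  have hqmeas : ∀ B : Set (Fin K → Θ), MeasurableSet B → Measurable fun θ => q θ B := by
    intro B hB
    have heq : (fun θ => q θ B) = fun θ =>
        ∑ σ ∈ SK, (r θ σ * (1 - α θ σ) * B.indicator 1 θ
          + r θ σ * α θ σ * B.indicator 1 (T σ θ)) := funext (hqB B hB)
    rw [heq]
    refine Finset.measurable_sum _ fun σ hσ => ?_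
    have hi : Measurable (B.indicator (1 : (Fin K → Θ) → ℝ≥0∞)) := measurable_one.indicator hB
    exact (((hrm σ hσ).mul (measurable_const.sub (hαm σ hσ))).mul hi).add
      (((hrm σ hσ).mul (hαm σ hσ)).mul (hi.comp (hTm σ)))
  refine ⟨hprob, hqmeas, ?_⟩
  -- the minimum function
  set m : Equiv.Perm (Fin K) → (Fin K → Θ) → ℝ≥0∞ :=
    fun σ θ => min (π θ * r θ σ) (π (T σ θ) * r (T σ θ) σ⁻¹) with hm
  have hmm : ∀ σ ∈ SK, Measurable (m σ) := fun σ hσ =>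
    (hπm.mul (hrm σ hσ)).min
      ((hπm.comp (hTm σ)).mul ((hrm σ⁻¹ (hSKinv σ hσ)).comp (hTm σ)))
  have hkey : ∀ θ, ∀ σ ∈ SK, π θ * (r θ σ * α θ σ) = m σ θ := by
    intro θ σ hσ
    rw [← mul_assoc, hα]
    by_cases h : 0 < π θ * r θ σ
    · rw [if_pos h]
      have hne : π θ * r θ σ ≠ 0 := h.ne'
      have hfin : π θ * r θ σ ≠ ∞ := ENNReal.mul_ne_top (hπfin θ) (hrfin θ σ hσ)
      have hdiv : π θ * r θ σ * ((π (T σ θ) * r (T σ θ) σ⁻¹) / (π θ * r θ σ))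
          = π (T σ θ) * r (T σ θ) σ⁻¹ := by
        rw [mul_comm, ENNReal.div_mul_cancel hne hfin]
      rcases min_cases 1 ((π (T σ θ) * r (T σ θ) σ⁻¹) / (π θ * r θ σ)) with ⟨h1, h2⟩ | ⟨h1, h2⟩
      · rw [h1, mul_one, hm]
        have hle : π θ * r θ σ ≤ π (T σ θ) * r (T σ θ) σ⁻¹ := by
          have := mul_le_mul' (le_refl (π θ * r θ σ)) h2
          rwa [mul_one, hdiv] at this
        exact (min_eq_left hle).symm
      · rw [h1, hdiv, hm]
        have hle : π (T σ θ) * r (T σ θ) σ⁻¹ ≤ π θ * r θ σ := by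
          have := mul_le_mul' (le_refl (π θ * r θ σ)) h2.le
          rwa [mul_one, hdiv] at this
        exact (min_eq_right hle).symm
    · rw [if_neg h, mul_zero]
      have h0 : π θ * r θ σ = 0 := by
        by_contra h'
        exact h (pos_iff_ne_zero.mpr h')
      simp [hm, h0]
  have hmsym : ∀ σ θ, m σ (T σ⁻¹ θ) = m σ⁻¹ θ := by
    intro σ θ
    simp only [hm, hTinv σ θ, inv_inv]
    exact min_comm _ _
  intro A B hA hB
  have expand : ∀ (A B : Set (Fin K → Θ)), MeasurableSet A → MeasurableSet B →
      ∫⁻ θ in A, q θ B ∂μ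
        = ∑ σ ∈ SK,
          ((∫⁻ θ, A.indicator 1 θ * B.indicator 1 θ
              * (π θ * (r θ σ * (1 - α θ σ))) ∂μprK)
            + ∫⁻ θ, A.indicator 1 θ * B.indicator 1 (T σ θ) * m σ θ ∂μprK) := by
    intro A B hA hB
    rw [hμ, setLIntegral_withDensity_eq_setLIntegral_mul μprK hπm (hqmeas B hB) hA,
      ← lintegral_indicator hA]
    have hpt : ∀ θ, A.indicator (π * fun θ => q θ B) θ
        = ∑ σ ∈ SK, (A.indicator 1 θ * B.indicator 1 θ * (π θ * (r θ σ * (1 - α θ σ)))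
            + A.indicator 1 θ * B.indicator 1 (T σ θ) * m σ θ) := by
      intro θ
      by_cases hθ : θ ∈ A
      · simp only [Set.indicator_of_mem hθ, Pi.mul_apply, Pi.one_apply, one_mul]
        rw [hqB B hB θ, Finset.mul_sum]
        refine Finset.sum_congr rfl fun σ hσ => ?_
        rw [← hkey θ σ hσ]
        ring
      · simp [Set.indicator_of_notMem hθ]
    rw [lintegral_congr hpt]
    have hiA : Measurable (A.indicator (1 : (Fin K → Θ) → ℝ≥0∞)) := measurable_one.indicator hA
    have hiB : Measurable (B.indicator (1 : (Fin K → Θ) → ℝ≥0∞)) := measurable_one.indicator hB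
    have hd : ∀ σ ∈ SK, Measurable fun θ =>
        A.indicator 1 θ * B.indicator 1 θ * (π θ * (r θ σ * (1 - α θ σ))) := fun σ hσ =>
      (hiA.mul hiB).mul (hπm.mul ((hrm σ hσ).mul (measurable_const.sub (hαm σ hσ))))
    have hiBT : ∀ σ, Measurable fun θ => B.indicator 1 (T σ θ) := fun σ => hiB.comp (hTm σ)
    rw [lintegral_finset_sum SK (f := fun σ θ => A.indicator 1 θ * B.indicator 1 θ * (π θ * (r θ σ * (1 - α θ σ)))
        + A.indicator 1 θ * B.indicator 1 (T σ θ) * m σ θ) (fun σ hσ => (hd σ hσ).add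
      ((hiA.mul (hiBT σ)).mul (hmm σ hσ)))]
    exact Finset.sum_congr rfl fun σ hσ => lintegral_add_left (hd σ hσ) _
  rw [expand A B hA hB, expand B A hB hA, Finset.sum_add_distrib, Finset.sum_add_distrib]
  congr 1
  · refine Finset.sum_congr rfl fun σ _ => lintegral_congr fun θ => ?_
    ring
  · have hiA : Measurable (A.indicator (1 : (Fin K → Θ) → ℝ≥0∞)) := measurable_one.indicator hA
    have hiB : Measurable (B.indicator (1 : (Fin K → Θ) → ℝ≥0∞)) := measurable_one.indicator hB
    have hoff : ∀ σ ∈ SK,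
        (∫⁻ θ, A.indicator 1 θ * B.indicator 1 (T σ θ) * m σ θ ∂μprK)
          = ∫⁻ θ, B.indicator 1 θ * A.indicator 1 (T σ⁻¹ θ) * m σ⁻¹ θ ∂μprK := by
      intro σ hσ
      have hg : Measurable fun θ => A.indicator 1 θ * B.indicator 1 (T σ θ) * m σ θ :=
        (hiA.mul ((measurable_one.indicator hB).comp (hTm σ) :
          Measurable fun θ => B.indicator 1 (T σ θ))).mul (hmm σ hσ)
      rw [← (hTmp σ⁻¹).lintegral_comp hg]
      refine lintegral_congr fun θ => ?_
      rw [hTinv σ θ, hmsym σ θ]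
      ring
    rw [Finset.sum_congr rfl hoff]
    refine Finset.sum_equiv (Equiv.inv (Equiv.Perm (Fin K))) (fun σ => ?_) (fun σ hσ => ?_)
    · simp only [Equiv.inv_apply]
      constructor
      · exact hSKinv σ
      · intro h; simpa using hSKinv σ⁻¹ h
    · simp only [Equiv.inv_apply]
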